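/- A graded sequence $\{p_n\}$ is $W$-Sheffer if and only if its $W$-dual basis $\{\varphi_r\}$ (defined by $\varphi_r(p_n/w_n)=\delta_{n,r}$) has the form $\varphi_r = \xi \cdot_W \eta^{r}$ for some functionals $\xi,\eta \in \mathbb{F}[x]^*$ with $v(\xi)=0$ and $v(\eta)=1$, where powers are taken with respect to the product $\cdot_W$. -/

import Mathlib

open Polynomial

/-- The identification of a linear functional `φ` on `𝔽[x]` with the power
series `∑ₙ φ(xⁿ/wₙ) yⁿ`; it is a ring isomorphism from `(𝔽[x]*, ·_W)` to
`𝔽[[y]]`, so products and powers with respect to `·_W` correspond to products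
and powers of power series. -/
noncomputable def toPS {F : Type*} [Field F] (w : ℕ → F)
    (φ : F[X] →ₗ[F] F) : PowerSeries F :=
  PowerSeries.mk fun n => φ ((w n)⁻¹ • X ^ n)

section Aux

variable {F : Type*} [Field F]

/-- The inverse of `toPS`: the functional associated to a power series. -/
noncomputable def st15ofPS (w : ℕ → F) (G : PowerSeries F) : F[X] →ₗ[F] F where
  toFun q := q.sum fun n a => a * (w n * PowerSeries.coeff n G)
  map_add' q r := Polynomial.sum_add_index q r _ (fun i => by simp) (fun i a b => by ring)
  map_smul' c q := by
    have h1 : (c • q).sum (fun n a => a * (w n * PowerSeries.coeff n G))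
        = q.sum fun n a => (c * a) * (w n * PowerSeries.coeff n G) :=
      Polynomial.sum_smul_index _ _ _ fun i => by simp
    simp only [RingHom.id_apply, smul_eq_mul, h1, Polynomial.sum_def, Finset.mul_sum]
    exact Finset.sum_congr rfl fun n _ => by ring

lemma st15ofPS_X_pow (w : ℕ → F) (G : PowerSeries F) (n : ℕ) :
    st15ofPS w G (X ^ n) = w n * PowerSeries.coeff n G := by
  show ((X : F[X]) ^ n).sum (fun n a => a * (w n * PowerSeries.coeff n G)) = _
  rw [Polynomial.X_pow_eq_monomial, Polynomial.sum_monomial_index _ _ (by simp), one_mul]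

lemma st15toPS_coeff (w : ℕ → F) (φ : F[X] →ₗ[F] F) (n : ℕ) :
    PowerSeries.coeff n (toPS w φ) = (w n)⁻¹ * φ (X ^ n) := by
  simp [toPS, map_smul, smul_eq_mul]

lemma st15toPS_ofPS (w : ℕ → F) (hw : ∀ n, w n ≠ 0) (G : PowerSeries F) :
    toPS w (st15ofPS w G) = G := by
  ext n
  rw [st15toPS_coeff, st15ofPS_X_pow, ← mul_assoc, inv_mul_cancel₀ (hw n), one_mul]

lemma st15toPS_injective (w : ℕ → F) (hw : ∀ n, w n ≠ 0) :
    Function.Injective (toPS w) := by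
  intro φ ψ h
  apply Polynomial.lhom_ext'
  intro n
  refine LinearMap.ext fun a => ?_
  have h1 := congrArg (PowerSeries.coeff n) h
  rw [st15toPS_coeff, st15toPS_coeff] at h1
  have h2 : φ (X ^ n) = ψ (X ^ n) :=
    mul_left_cancel₀ (inv_ne_zero (hw n)) h1
  simp only [LinearMap.coe_comp, Function.comp_apply]
  rw [← Polynomial.C_mul_X_pow_eq_monomial, ← Polynomial.smul_eq_C_mul, map_smul, map_smul, h2]

lemma st15ofPS_toPS (w : ℕ → F) (hw : ∀ n, w n ≠ 0) (φ : F[X] →ₗ[F] F) :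
    st15ofPS w (toPS w φ) = φ :=
  st15toPS_injective w hw (by rw [st15toPS_ofPS w hw])

lemma st15toPS_add (w : ℕ → F) (φ ψ : F[X] →ₗ[F] F) :
    toPS w (φ + ψ) = toPS w φ + toPS w ψ := by
  ext n; simp [st15toPS_coeff, mul_add]

lemma st15toPS_smul (w : ℕ → F) (c : F) (φ : F[X] →ₗ[F] F) :
    toPS w (c • φ) = c • toPS w φ := by
  ext n; simp [st15toPS_coeff]; ring

/-- The `W`-exponential-type series attached to a translation amount `h`. -/
noncomputable def st15E (w : ℕ → F) (h : F) : PowerSeries F :=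
  PowerSeries.mk fun m => h ^ m * (w m)⁻¹

end Aux

section Aux2

variable {F : Type*} [Field F]

lemma st15expand (B : ℕ → PowerSeries F)
    (hBd : ∀ r, PowerSeries.coeff r (B r) ≠ 0)
    (hB0 : ∀ r k, k < r → PowerSeries.coeff k (B r) = 0)
    (G : PowerSeries F) :
    ∀ n : ℕ, ∃ c : ℕ → F, ∀ k ≤ n, PowerSeries.coeff k G =
      ∑ r ∈ Finset.range (n + 1), c r * PowerSeries.coeff k (B r) := by
  intro n
  induction n with
  | zero =>
    refine ⟨fun _ => PowerSeries.coeff 0 G * (PowerSeries.coeff 0 (B 0))⁻¹, ?_⟩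
    intro k hk
    interval_cases k
    rw [Finset.sum_range_one, inv_mul_cancel_right₀ (hBd 0)]
  | succ n ih =>
    obtain ⟨c, hc⟩ := ih
    refine ⟨Function.update c (n + 1)
      ((PowerSeries.coeff (n + 1) G -
        ∑ r ∈ Finset.range (n + 1), c r * PowerSeries.coeff (n + 1) (B r)) *
        (PowerSeries.coeff (n + 1) (B (n + 1)))⁻¹), ?_⟩
    intro k hk
    rw [Finset.sum_range_succ]
    have hupd : ∀ r ∈ Finset.range (n + 1),
        Function.update c (n + 1)
          ((PowerSeries.coeff (n + 1) G -
            ∑ r ∈ Finset.range (n + 1), c r * PowerSeries.coeff (n + 1) (B r)) *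
            (PowerSeries.coeff (n + 1) (B (n + 1)))⁻¹) r * PowerSeries.coeff k (B r)
          = c r * PowerSeries.coeff k (B r) := by
      intro r hr
      rw [Function.update_of_ne (by simp at hr; omega)]
    rw [Finset.sum_congr rfl hupd, Function.update_self]
    rcases Nat.lt_succ_iff_lt_or_eq.mp (Nat.lt_succ_of_le hk) with h | h
    · rw [hB0 (n + 1) k (by omega), mul_zero, add_zero]
      exact hc k (by omega)
    · subst h
      rw [inv_mul_cancel_right₀ (hBd (n + 1))]
      ring

lemma st15key (M : PowerSeries F →ₗ[F] PowerSeries F)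
    (hcont : ∀ (N : ℕ) (G : PowerSeries F), (∀ k < N, PowerSeries.coeff k G = 0) →
      ∀ k < N + 1, PowerSeries.coeff k (M G) = 0)
    (B : ℕ → PowerSeries F)
    (hBd : ∀ r, PowerSeries.coeff r (B r) ≠ 0)
    (hB0 : ∀ r k, k < r → PowerSeries.coeff k (B r) = 0)
    (g : PowerSeries F) (hMB : ∀ r, M (B r) = g * B r) (G : PowerSeries F) :
    M G = g * G := by
  ext n
  obtain ⟨c, hc⟩ := st15expand B hBd hB0 G n
  set P : PowerSeries F := ∑ r ∈ Finset.range (n + 1), c r • B r with hP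
  have hPk : ∀ k ≤ n, PowerSeries.coeff k P = PowerSeries.coeff k G := by
    intro k hk
    rw [hP, map_sum]
    simp only [map_smul, smul_eq_mul]
    exact (hc k hk).symm
  have hrem : ∀ k < n + 1, PowerSeries.coeff k (G - P) = 0 := by
    intro k hk
    rw [map_sub, hPk k (Nat.lt_succ_iff.mp hk), sub_self]
  have h1 : PowerSeries.coeff n (M (G - P)) = 0 :=
    hcont (n + 1) (G - P) hrem n (by omega)
  have h2 : PowerSeries.coeff n (g * (G - P)) = 0 := by
    rw [PowerSeries.coeff_mul]
    refine Finset.sum_eq_zero fun x hx => ?_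
    rw [Finset.HasAntidiagonal.mem_antidiagonal] at hx
    rw [hrem x.2 (by omega), mul_zero]
  have hMP : M P = g * P := by
    rw [hP, map_sum, Finset.mul_sum]
    exact Finset.sum_congr rfl fun r _ => by
      rw [map_smul, hMB r, Algebra.mul_smul_comm]
  have e1 : M G = M P + M (G - P) := by rw [← map_add]; congr 1; ring
  have e2 : g * G = g * P + g * (G - P) := by ring
  rw [e1, e2, map_add, map_add, hMP, h1, h2]

lemma st15coeff_pow_lt (a : PowerSeries F) (ha : PowerSeries.coeff 0 a = 0) :
    ∀ (k j : ℕ), j < k → PowerSeries.coeff j (a ^ k) = 0 := by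
  intro k
  induction k with
  | zero => omega
  | succ k ih =>
    intro j hj
    rw [pow_succ, PowerSeries.coeff_mul]
    refine Finset.sum_eq_zero fun x hx => ?_
    rw [Finset.HasAntidiagonal.mem_antidiagonal] at hx
    rcases Nat.eq_zero_or_pos x.2 with h0 | h0
    · have : x.2 = 0 := h0
      rw [this] at hx ⊢
      rw [ha, mul_zero]
    · rw [ih x.1 (by omega), zero_mul]

lemma st15coeff_pow_self (a : PowerSeries F) (ha : PowerSeries.coeff 0 a = 0) :
    ∀ k, PowerSeries.coeff k (a ^ k) = (PowerSeries.coeff 1 a) ^ k := by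
  intro k
  induction k with
  | zero => simp
  | succ k ih =>
    rw [pow_succ, PowerSeries.coeff_mul]
    rw [Finset.sum_eq_single (k, 1)]
    · rw [ih, pow_succ]
    · intro x hx hne
      rw [Finset.HasAntidiagonal.mem_antidiagonal] at hx
      rcases Nat.lt_trichotomy x.1 k with h | h | h
      · rw [st15coeff_pow_lt a ha k x.1 h, zero_mul]
      · exfalso; apply hne
        have : x.2 = 1 := by omega
        exact Prod.ext h this
      · have : x.2 = 0 := by omega
        rw [this, ha, mul_zero]
    · intro hmem
      exfalso; exact hmem (by rw [Finset.HasAntidiagonal.mem_antidiagonal])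

end Aux2

section Aux3

variable {F : Type*} [Field F]

lemma st15sub_smul_degree_lt (q : F[X]) (n : ℕ) (hq : q.degree < ((n + 1 : ℕ) : WithBot ℕ))
    (r : F[X]) (hr : r.degree = n) :
    (q - (q.coeff n / r.coeff n) • r).degree < (n : WithBot ℕ) := by
  have hrn : r.coeff n ≠ 0 := by
    have h1 : r.natDegree = n := Polynomial.natDegree_eq_of_degree_eq_some hr
    rw [← h1, Polynomial.coeff_natDegree]
    exact Polynomial.leadingCoeff_ne_zero.mpr (fun h0 => by simp [h0] at hr)
  rw [Polynomial.degree_lt_iff_coeff_zero]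
  intro m hm
  rw [Polynomial.coeff_sub, Polynomial.coeff_smul, smul_eq_mul]
  rcases eq_or_lt_of_le hm with h | h
  · subst h
    rw [div_mul_cancel₀ _ hrn, sub_self]
  · have h1 : q.coeff m = 0 := by
      apply Polynomial.coeff_eq_zero_of_degree_lt
      refine lt_of_lt_of_le hq ?_
      exact_mod_cast (by omega : n + 1 ≤ m)
    have h2 : r.coeff m = 0 := by
      apply Polynomial.coeff_eq_zero_of_degree_lt
      rw [hr]; exact_mod_cast h
    rw [h1, h2, mul_zero, sub_self]

lemma st15span (p : ℕ → F[X]) (hp : ∀ n, (p n).degree = n) :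
    ∀ (n : ℕ) (q : F[X]), q.degree < (n : WithBot ℕ) →
      q ∈ Submodule.span F (p '' Set.Iio n) := by
  intro n
  induction n with
  | zero =>
    intro q hq
    have : q = 0 := Polynomial.degree_eq_bot.mp (Nat.WithBot.lt_zero_iff.mp (by exact_mod_cast hq))
    simp [this]
  | succ n ih =>
    intro q hq
    by_cases h : q.degree < (n : WithBot ℕ)
    · exact Submodule.span_mono
        (Set.image_mono (fun x hx => lt_trans hx (Nat.lt_succ_self n))) (ih q h)
    · have hq' := st15sub_smul_degree_lt q n (by exact_mod_cast hq) (p n) (hp n)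
      have e : q = (q - (q.coeff n / (p n).coeff n) • p n)
          + (q.coeff n / (p n).coeff n) • p n := by ring
      rw [e]
      refine Submodule.add_mem _ (Submodule.span_mono
        (Set.image_mono (fun x hx => lt_trans hx (Nat.lt_succ_self n))) (ih _ hq')) ?_
      exact Submodule.smul_mem _ _
        (Submodule.subset_span ⟨n, Set.mem_Iio.mpr (Nat.lt_succ_self n), rfl⟩)

lemma st15ext_on_p (p : ℕ → F[X]) (hp : ∀ n, (p n).degree = n)
    (φ ψ : F[X] →ₗ[F] F) (hagree : ∀ n, φ (p n) = ψ (p n)) : φ = ψ := by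
  refine LinearMap.ext fun q => ?_
  have hq : q ∈ Submodule.span F (Set.range p) := by
    refine Submodule.span_mono (Set.image_subset_range p _) (st15span p hp (q.natDegree + 1) q ?_)
    exact lt_of_le_of_lt Polynomial.degree_le_natDegree (by exact_mod_cast Nat.lt_succ_self _)
  induction hq using Submodule.span_induction with
  | mem x h => obtain ⟨k, rfl⟩ := h; exact hagree k
  | zero => simp
  | add x y _ _ hx hy => rw [map_add, map_add, hx, hy]
  | smul a x _ hx => rw [map_smul, map_smul, hx]

lemma st15Q_degree_lt (p : ℕ → F[X]) (hp : ∀ n, (p n).degree = n)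
    (w : ℕ → F) (Q : F[X] →ₗ[F] F[X]) (hQ0 : Q (p 0) = 0)
    (hQ : ∀ n : ℕ, Q (p (n + 1)) = (w (n + 1) / w n) • p n) :
    ∀ (n : ℕ) (q : F[X]), q.degree < ((n + 1 : ℕ) : WithBot ℕ) →
      (Q q).degree < (n : WithBot ℕ) := by
  intro n q hq
  have hmem := st15span p hp (n + 1) q hq
  suffices h : Q q ∈ Polynomial.degreeLT F n by exact Polynomial.mem_degreeLT.mp h
  clear hq
  induction hmem using Submodule.span_induction with
  | mem x h =>
    obtain ⟨k, hk, rfl⟩ := h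
    rw [Set.mem_Iio] at hk
    match k with
    | 0 => rw [hQ0]; exact Submodule.zero_mem _
    | Nat.succ j =>
      rw [hQ j, Polynomial.mem_degreeLT]
      refine lt_of_le_of_lt (Polynomial.degree_smul_le _ _) ?_
      rw [hp j]
      exact_mod_cast (by omega : j < n)
  | zero => rw [map_zero]; exact Submodule.zero_mem _
  | add x y _ _ hx hy => rw [map_add]; exact Submodule.add_mem _ hx hy
  | smul a x _ hx => rw [map_smul]; exact Submodule.smul_mem _ _ hx

lemma st15vanish (φ : F[X] →ₗ[F] F) (N : ℕ) (hv : ∀ k < N, φ (X ^ k) = 0) :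
    ∀ q : F[X], q.degree < (N : WithBot ℕ) → φ q = 0 := by
  intro q hq
  conv_lhs => rw [← Polynomial.sum_monomial_eq q]
  rw [Polynomial.sum_def, map_sum]
  refine Finset.sum_eq_zero fun i hi => ?_
  have hiN : i < N := by
    have h1 : (i : WithBot ℕ) ≤ q.degree :=
      Polynomial.le_degree_of_ne_zero (Polynomial.mem_support_iff.mp hi)
    exact_mod_cast lt_of_le_of_lt h1 hq
  rw [← Polynomial.C_mul_X_pow_eq_monomial, ← Polynomial.smul_eq_C_mul, map_smul,
    hv i hiN, smul_zero]

lemma st15ofPS_apply (w : ℕ → F) (G : PowerSeries F) (q : F[X]) :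
    st15ofPS w G q = ∑ i ∈ q.support, q.coeff i * (w i * PowerSeries.coeff i G) :=
  rfl

lemma st15ofPS_add (w : ℕ → F) (G1 G2 : PowerSeries F) :
    st15ofPS w (G1 + G2) = st15ofPS w G1 + st15ofPS w G2 := by
  refine LinearMap.ext fun q => ?_
  rw [LinearMap.add_apply, st15ofPS_apply, st15ofPS_apply, st15ofPS_apply,
    ← Finset.sum_add_distrib]
  refine Finset.sum_congr rfl fun i _ => ?_
  rw [map_add]; ring

lemma st15ofPS_smul (w : ℕ → F) (c : F) (G : PowerSeries F) :
    st15ofPS w (c • G) = c • st15ofPS w G := by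
  refine LinearMap.ext fun q => ?_
  rw [LinearMap.smul_apply, st15ofPS_apply, st15ofPS_apply, smul_eq_mul, Finset.mul_sum]
  refine Finset.sum_congr rfl fun i _ => ?_
  rw [map_smul, smul_eq_mul]; ring

/-- The adjoint of `Q` transported to power series. -/
noncomputable def st15M (w : ℕ → F) (Q : F[X] →ₗ[F] F[X]) :
    PowerSeries F →ₗ[F] PowerSeries F where
  toFun G := toPS w ((st15ofPS w G) ∘ₗ Q)
  map_add' G1 G2 := by
    show toPS w (st15ofPS w (G1 + G2) ∘ₗ Q) = toPS w (st15ofPS w G1 ∘ₗ Q) + toPS w (st15ofPS w G2 ∘ₗ Q)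
    rw [st15ofPS_add, LinearMap.add_comp, st15toPS_add]
  map_smul' c G := by
    show toPS w (st15ofPS w (c • G) ∘ₗ Q) = (RingHom.id F) c • toPS w (st15ofPS w G ∘ₗ Q)
    rw [st15ofPS_smul, LinearMap.smul_comp, st15toPS_smul, RingHom.id_apply]

lemma st15M_apply (w : ℕ → F) (Q : F[X] →ₗ[F] F[X]) (G : PowerSeries F) :
    st15M w Q G = toPS w ((st15ofPS w G) ∘ₗ Q) := rfl

end Aux3

section Aux4

variable {F : Type*} [Field F]

lemma st15toPS_comp_T (w : ℕ → F) (hw : ∀ n, w n ≠ 0)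
    (T : F → F[X] →ₗ[F] F[X])
    (hT : ∀ (h : F) (n : ℕ), T h (X ^ n) =
      ∑ k ∈ Finset.range (n + 1),
        (w n * h ^ (n - k) / (w (n - k) * w k)) • (X : F[X]) ^ k)
    (h : F) (φ : F[X] →ₗ[F] F) :
    toPS w (φ ∘ₗ T h) = st15E w h * toPS w φ := by
  ext n
  rw [st15toPS_coeff, LinearMap.comp_apply, hT h n, map_sum, Finset.mul_sum,
    PowerSeries.coeff_mul, Finset.Nat.sum_antidiagonal_eq_sum_range_succ_mk]
  conv_rhs => rw [← Finset.sum_range_reflect]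
  refine Finset.sum_congr rfl fun k hk => ?_
  rw [Finset.mem_range] at hk
  have e2 : n + 1 - 1 - k = n - k := by omega
  have e1 : n - (n - k) = k := by omega
  rw [map_smul, smul_eq_mul, e2]
  simp only [st15E, PowerSeries.coeff_mk, st15toPS_coeff]
  rw [e1, div_eq_mul_inv, mul_inv,
    show (w n)⁻¹ * (w n * h ^ (n - k) * ((w (n - k))⁻¹ * (w k)⁻¹) * φ (X ^ k)) =
      ((w n)⁻¹ * w n) * (h ^ (n - k) * ((w (n - k))⁻¹ * (w k)⁻¹) * φ (X ^ k)) from by ring,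
    inv_mul_cancel₀ (hw n), one_mul]
  ring

end Aux4

/-- A graded sequence `{pₙ}` is `W`-Sheffer iff its `W`-dual basis `{φᵣ}` is
of the form `φᵣ = ξ ·_W η^r` with `v(ξ) = 0` and `v(η) = 1` (powers taken for
the product `·_W`, i.e. under the canonical identification with `𝔽[[y]]`). -/
theorem stmt15 {F : Type*} [Field F] (w : ℕ → F) (hw0 : w 0 = 1)
    (hw : ∀ n, w n ≠ 0)
    (p : ℕ → F[X]) (hp : ∀ n, (p n).degree = n)
    (Q : F[X] →ₗ[F] F[X]) (hQ0 : Q (p 0) = 0)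
    (hQ : ∀ n : ℕ, Q (p (n + 1)) = (w (n + 1) / w n) • p n)
    (T : F → F[X] →ₗ[F] F[X])
    (hT : ∀ (h : F) (n : ℕ), T h (X ^ n) =
      ∑ k ∈ Finset.range (n + 1),
        (w n * h ^ (n - k) / (w (n - k) * w k)) • (X : F[X]) ^ k)
    -- the `W`-dual basis of `{pₙ}`
    (φ : ℕ → F[X] →ₗ[F] F)
    (hφ : ∀ r n : ℕ, φ r ((w n)⁻¹ • p n) = if n = r then 1 else 0) :
    (∀ h : F, Q ∘ₗ T h = T h ∘ₗ Q) ↔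
      ∃ ξ η : F[X] →ₗ[F] F,
        ξ 1 ≠ 0 ∧ η 1 = 0 ∧ η X ≠ 0 ∧
        ∀ r : ℕ, toPS w (φ r) = toPS w ξ * (toPS w η) ^ r := by
  -- values of the dual basis on the `pₙ`
  have hφp : ∀ r n, φ r (p n) = if n = r then w n else 0 := by
    intro r n
    have h1 := hφ r n
    rw [map_smul, smul_eq_mul] at h1
    have h2 : φ r (p n) = w n * ((w n)⁻¹ * φ r (p n)) := by
      rw [← mul_assoc, mul_inv_cancel₀ (hw n), one_mul]
    rw [h2, h1]
    split <;> simp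
  -- the adjoint of `Q` shifts the dual basis
  have hφQ : ∀ r, (φ r) ∘ₗ Q = φ (r + 1) := by
    intro r
    refine st15ext_on_p p hp _ _ fun n => ?_
    match n with
    | 0 =>
      rw [LinearMap.comp_apply, hQ0, map_zero, hφp]
      simp
    | Nat.succ m =>
      rw [LinearMap.comp_apply, hQ m, map_smul, smul_eq_mul, hφp, hφp]
      rcases eq_or_ne m r with hmr | hmr
      · subst hmr
        rw [if_pos rfl, if_pos rfl, div_mul_cancel₀ _ (hw m)]
      · rw [if_neg hmr, if_neg (by omega), mul_zero]
  -- `φ r` kills monomials of degree `< r`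
  have hφmem : ∀ r : ℕ, ∀ q : F[X], q ∈ Submodule.span F (p '' Set.Iio r) → φ r q = 0 := by
    intro r q hq
    induction hq using Submodule.span_induction with
    | mem x hx =>
      obtain ⟨j, hj, rfl⟩ := hx
      rw [Set.mem_Iio] at hj
      rw [hφp, if_neg (by omega)]
    | zero => simp
    | add x y _ _ hx hy => rw [map_add, hx, hy, add_zero]
    | smul a x _ hx => rw [map_smul, hx, smul_zero]
  have hφvan : ∀ r : ℕ, ∀ q : F[X], q.degree < (r : WithBot ℕ) → φ r q = 0 :=
    fun r q hq => hφmem r q (st15span p hp r q hq)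
  have hφX : ∀ r k : ℕ, k < r → φ r (X ^ k) = 0 := by
    intro r k hk
    exact hφvan r (X ^ k) (by rw [Polynomial.degree_X_pow]; exact_mod_cast hk)
  -- order facts for the series `toPS w (φ r)`
  have hAlow : ∀ r k, k < r → PowerSeries.coeff k (toPS w (φ r)) = 0 := by
    intro r k hk
    rw [st15toPS_coeff, hφX r k hk, mul_zero]
  have hAr : ∀ r, PowerSeries.coeff r (toPS w (φ r)) ≠ 0 := by
    intro r
    have hc1 : ((X : F[X]) ^ r).coeff r = 1 := by simp
    have hd := st15sub_smul_degree_lt (p r) r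
      (by rw [hp r]; exact_mod_cast Nat.lt_succ_self r) (X ^ r)
      (by rw [Polynomial.degree_X_pow])
    have hφd := hφvan r _ hd
    rw [map_sub, map_smul, smul_eq_mul, hc1, div_one, sub_eq_zero] at hφd
    have hval : (p r).coeff r * φ r (X ^ r) = w r := by
      rw [← hφd, hφp, if_pos rfl]
    have hne : φ r (X ^ r) ≠ 0 := fun h0 => hw r (by rw [← hval, h0, mul_zero])
    rw [st15toPS_coeff]
    exact mul_ne_zero (inv_ne_zero (hw r)) hne
  -- basic facts about the transported adjoint `st15M w Q`
  have hMtoPS : ∀ ψ : F[X] →ₗ[F] F, st15M w Q (toPS w ψ) = toPS w (ψ ∘ₗ Q) := by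
    intro ψ
    rw [st15M_apply, st15ofPS_toPS w hw]
  have hMA : ∀ r, st15M w Q (toPS w (φ r)) = toPS w (φ (r + 1)) := by
    intro r
    rw [hMtoPS, hφQ]
  have hMcont : ∀ (N : ℕ) (G : PowerSeries F),
      (∀ k < N, PowerSeries.coeff k G = 0) →
      ∀ k < N + 1, PowerSeries.coeff k (st15M w Q G) = 0 := by
    intro N G hG k hk
    rw [st15M_apply, st15toPS_coeff, LinearMap.comp_apply]
    have hdeg : (Q (X ^ k)).degree < (N : WithBot ℕ) :=
      st15Q_degree_lt p hp w Q hQ0 hQ N (X ^ k)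
        (by rw [Polynomial.degree_X_pow]; exact_mod_cast hk)
    have hzero : st15ofPS w G (Q (X ^ k)) = 0 := by
      rw [st15ofPS_apply]
      refine Finset.sum_eq_zero fun i hi => ?_
      have hiN : i < N := by
        have h1 := Polynomial.le_degree_of_ne_zero (Polynomial.mem_support_iff.mp hi)
        exact_mod_cast lt_of_le_of_lt h1 hdeg
      rw [hG i hiN, mul_zero, mul_zero]
    rw [hzero, mul_zero]
  constructor
  · -- Sheffer ⇒ factorization of the dual basis
    intro hcomm
    have hME : ∀ (h : F) (G : PowerSeries F),
        st15M w Q (st15E w h * G) = st15E w h * st15M w Q G := by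
      intro h G
      have e1 : st15ofPS w (st15E w h * G) = (st15ofPS w G) ∘ₗ T h := by
        apply st15toPS_injective w hw
        rw [st15toPS_ofPS w hw, st15toPS_comp_T w hw T hT, st15toPS_ofPS w hw]
      rw [st15M_apply, e1, LinearMap.comp_assoc, ← hcomm h, ← LinearMap.comp_assoc,
        st15toPS_comp_T w hw T hT, ← st15M_apply]
    set v : PowerSeries F := st15E w 1 - 1 with hv
    have hv0 : PowerSeries.coeff 0 v = 0 := by
      rw [hv, map_sub]
      simp [st15E, hw0]
    have hv1 : PowerSeries.coeff 1 v = (w 1)⁻¹ := by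
      rw [hv, map_sub]
      simp [st15E, PowerSeries.coeff_one]
    have hMv : ∀ G, st15M w Q (v * G) = v * st15M w Q G := by
      intro G
      rw [hv, sub_mul, one_mul, map_sub, hME 1 G, sub_mul, one_mul]
    set g : PowerSeries F := st15M w Q 1 with hg
    have hMB : ∀ k, st15M w Q (v ^ k) = g * v ^ k := by
      intro k
      induction k with
      | zero => rw [pow_zero, mul_one]
      | succ k ih =>
        rw [pow_succ, mul_comm (v ^ k) v, hMv, ih]
        ring
    have hMg : ∀ G, st15M w Q G = g * G := by
      refine st15key (st15M w Q) hMcont (fun k => v ^ k) ?_ ?_ g hMB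
      · intro r
        rw [st15coeff_pow_self v hv0, hv1]
        exact pow_ne_zero _ (inv_ne_zero (hw 1))
      · intro r k hk
        exact st15coeff_pow_lt v hv0 r k hk
    have hg0 : PowerSeries.coeff 0 g = 0 :=
      hMcont 0 1 (fun k hk => absurd hk (Nat.not_lt_zero k)) 0 (by omega)
    have hAg : ∀ r, toPS w (φ r) = toPS w (φ 0) * g ^ r := by
      intro r
      induction r with
      | zero => rw [pow_zero, mul_one]
      | succ r ih =>
        rw [← hMA r, hMg, ih, pow_succ]
        ring
    have hA00 : PowerSeries.coeff 0 (toPS w (φ 0)) ≠ 0 := hAr 0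
    have hg1 : PowerSeries.coeff 1 g ≠ 0 := by
      have h1 := hAr 1
      rw [hAg 1, pow_one, PowerSeries.coeff_mul,
        Finset.Nat.sum_antidiagonal_eq_sum_range_succ_mk, Finset.sum_range_succ,
        Finset.sum_range_one] at h1
      intro h0
      apply h1
      simp [hg0, h0]
    refine ⟨φ 0, st15ofPS w g, ?_, ?_, ?_, ?_⟩
    · have h1 := hA00
      rw [st15toPS_coeff, pow_zero] at h1
      exact fun h0 => h1 (by rw [h0, mul_zero])
    · have h1 := st15ofPS_X_pow w g 0
      rw [pow_zero] at h1
      rw [h1, hg0, mul_zero]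
    · have h1 := st15ofPS_X_pow w g 1
      rw [pow_one] at h1
      rw [h1]
      exact mul_ne_zero (hw 1) hg1
    · intro r
      rw [st15toPS_ofPS w hw, hAg r]
  · -- factorization of the dual basis ⇒ Sheffer
    rintro ⟨ξ, η, hξ, hη0, hη1, hfact⟩ h
    have hMf : ∀ G, st15M w Q G = toPS w η * G := by
      refine st15key (st15M w Q) hMcont (fun r => toPS w (φ r)) hAr hAlow (toPS w η) ?_
      intro r
      show st15M w Q (toPS w (φ r)) = toPS w η * toPS w (φ r)
      rw [hMA r, hfact (r + 1), hfact r, pow_succ]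
      ring
    have hfun : ∀ ψ : F[X] →ₗ[F] F, (ψ ∘ₗ Q) ∘ₗ T h = (ψ ∘ₗ T h) ∘ₗ Q := by
      intro ψ
      apply st15toPS_injective w hw
      rw [st15toPS_comp_T w hw T hT, ← hMtoPS, ← hMtoPS, hMf, hMf,
        st15toPS_comp_T w hw T hT]
      ring
    refine LinearMap.ext fun q => ?_
    refine Polynomial.ext fun n => ?_
    have h1 := LinearMap.congr_fun (hfun (Polynomial.lcoeff F n)) q
    simpa using h1
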